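/- Let r ∈ |F^×| and let W ∈ A^{m−1}(r)[z_m] be a Weierstrass polynomial of degree d > 0. Then there exists b ∈ F with |b| ≤ r such that W(0,…,0,b) = 0. -/

import Mathlib

open MvPowerSeries Filter

set_option linter.unusedSectionVars false

namespace NA

variable (F : Type) [NormedField F] [IsUltrametricDist F]

/-- The value group `|F^×|` of a normed field, as a set of real numbers. -/
def VG : Set ℝ := {r | ∃ c : F, c ≠ 0 ∧ ‖c‖ = r}

lemma VG.pos {r : ℝ} (hr : r ∈ VG F) : 0 < r := by
  obtain ⟨c, hc, rfl⟩ := hr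
  exact norm_pos_iff.mpr hc

/-- The total degree `|γ|` of a multi-index. -/
def mdeg {m : ℕ} (γ : Fin m →₀ ℕ) : ℕ := γ.sum fun _ n => n

lemma mdeg_add {m : ℕ} (α β : Fin m →₀ ℕ) : mdeg (α + β) = mdeg α + mdeg β :=
  Finsupp.sum_add_index' (fun _ => rfl) (fun _ _ _ => rfl)

/-- The ring `A^m(r)` of power series converging on the closed ball of radius `r`:
those `f = Σ a_γ z^γ` with `|a_γ| r^{|γ|} → 0` as `|γ| → ∞`. -/
def A (m : ℕ) (r : ℝ) : Subring (MvPowerSeries (Fin m) F) where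
  carrier := {f | Tendsto (fun γ : Fin m →₀ ℕ => ‖coeff γ f‖ * r ^ mdeg γ)
    cofinite (nhds 0)}
  zero_mem' := by
    simp only [Set.mem_setOf_eq, map_zero, norm_zero, zero_mul]
    exact tendsto_const_nhds
  one_mem' := by
    refine tendsto_const_nhds.congr' ?_
    refine Filter.eventuallyEq_of_mem ((Set.finite_singleton (0 : Fin m →₀ ℕ)).compl_mem_cofinite) ?_
    intro γ hγ
    have : (γ : Fin m →₀ ℕ) ≠ 0 := by simpa using hγ
    simp [MvPowerSeries.coeff_one, this]
  add_mem' := by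
    intro f g hf hg
    simp only [Set.mem_setOf_eq] at hf hg ⊢
    rw [tendsto_zero_iff_abs_tendsto_zero] at hf hg ⊢
    refine squeeze_zero (fun γ => abs_nonneg _) (fun γ => ?_) (by simpa using hf.add hg)
    simp only [Function.comp_apply, abs_mul, abs_norm, abs_pow, map_add, ← add_mul]
    exact mul_le_mul_of_nonneg_right (norm_add_le _ _) (by positivity)
  neg_mem' := by
    intro f hf
    simpa only [Set.mem_setOf_eq, map_neg, norm_neg] using hf
  mul_mem' := by
    intro f g hf hg
    simp only [Set.mem_setOf_eq] at hf hg ⊢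
    rw [tendsto_zero_iff_abs_tendsto_zero] at hf hg ⊢
    have habs : ∀ (h : MvPowerSeries (Fin m) F),
        (abs ∘ fun γ : Fin m →₀ ℕ => ‖coeff γ h‖ * r ^ mdeg γ)
          = fun γ => ‖coeff γ h‖ * |r| ^ mdeg γ := by
      intro h; funext γ
      simp [Function.comp_apply, abs_mul, abs_pow]
    rw [habs] at hf hg ⊢
    set v := fun (h : MvPowerSeries (Fin m) F) (γ : Fin m →₀ ℕ) =>
      ‖coeff γ h‖ * |r| ^ mdeg γ with hv
    have vnonneg : ∀ h γ, 0 ≤ v h γ := fun h γ => by positivity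
    have finlt : ∀ (h : MvPowerSeries (Fin m) F),
        Tendsto (v h) cofinite (nhds 0) → ∀ δ : ℝ, 0 < δ → {γ | ¬ v h γ < δ}.Finite := by
      intro h hh δ hδ
      have := (Metric.tendsto_nhds.mp hh) δ hδ
      rw [Filter.eventually_cofinite] at this
      refine this.subset ?_
      intro γ hγ
      simp only [Set.mem_setOf_eq, Real.dist_eq, sub_zero] at *
      intro hc; exact hγ (lt_of_abs_lt hc)
    have bound : ∀ (h : MvPowerSeries (Fin m) F),
        Tendsto (v h) cofinite (nhds 0) → ∃ M : ℝ, 1 ≤ M ∧ ∀ γ, v h γ ≤ M := by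
      intro h hh
      have h1 := finlt h hh 1 one_pos
      refine ⟨1 + ∑ γ ∈ h1.toFinset, v h γ,
        le_add_of_nonneg_right (Finset.sum_nonneg fun γ _ => vnonneg h γ), ?_⟩
      intro γ
      by_cases hγ : γ ∈ h1.toFinset
      · have := Finset.single_le_sum (f := v h) (fun γ _ => vnonneg h γ) hγ
        linarith
      · simp only [Set.Finite.mem_toFinset, Set.mem_setOf_eq, not_not] at hγ
        have hs : (0:ℝ) ≤ ∑ γ ∈ h1.toFinset, v h γ :=
          Finset.sum_nonneg fun γ _ => vnonneg h γ
        linarith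
    rw [Metric.tendsto_nhds]
    intro ε hε
    rw [Filter.eventually_cofinite]
    obtain ⟨Mf, hMf1, hMf⟩ := bound f hf
    obtain ⟨Mg, hMg1, hMg⟩ := bound g hg
    set M := max Mf Mg with hMdef
    have hM1 : (1:ℝ) ≤ M := le_trans hMf1 (le_max_left _ _)
    have hM0 : (0:ℝ) < M := lt_of_lt_of_le one_pos hM1
    set δ := ε / M with hδdef
    have hδ0 : 0 < δ := div_pos hε hM0
    have hSf := finlt f hf δ hδ0
    have hSg := finlt g hg δ hδ0
    refine ((hSf.prod hSg).image
      (fun p : (Fin m →₀ ℕ) × (Fin m →₀ ℕ) => p.1 + p.2)).subset ?_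
    intro γ hγ
    simp only [Set.mem_setOf_eq, Real.dist_eq, sub_zero] at hγ
    have hγ' : ε ≤ v (f * g) γ := by
      rw [abs_of_nonneg (vnonneg (f*g) γ)] at hγ
      exact not_lt.mp hγ
    have hne : (Finset.HasAntidiagonal.antidiagonal γ).Nonempty := ⟨(γ, 0), by simp⟩
    obtain ⟨p, hp, hple⟩ := IsUltrametricDist.exists_norm_finset_sum_le_of_nonempty hne
      (fun p : (Fin m →₀ ℕ) × (Fin m →₀ ℕ) => coeff p.1 f * coeff p.2 g)
    have hpsum : p.1 + p.2 = γ := Finset.HasAntidiagonal.mem_antidiagonal.mp hp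
    have key : v (f * g) γ ≤ v f p.1 * v g p.2 := by
      have hdeg : mdeg γ = mdeg p.1 + mdeg p.2 := by
        rw [← hpsum, mdeg_add]
      calc v (f * g) γ = ‖coeff γ (f * g)‖ * |r| ^ mdeg γ := rfl
        _ ≤ ‖coeff p.1 f * coeff p.2 g‖ * |r| ^ mdeg γ := by
            refine mul_le_mul_of_nonneg_right ?_ (by positivity)
            rw [MvPowerSeries.coeff_mul]
            exact hple
        _ = (‖coeff p.1 f‖ * |r| ^ mdeg p.1) * (‖coeff p.2 g‖ * |r| ^ mdeg p.2) := by
            rw [norm_mul, hdeg, pow_add]; ring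
    refine ⟨p, ⟨?_, ?_⟩, hpsum⟩
    · simp only [Set.mem_setOf_eq, not_lt]
      have h1 : ε ≤ v f p.1 * M := by
        refine hγ'.trans (key.trans ?_)
        exact mul_le_mul_of_nonneg_left ((hMg p.2).trans (le_max_right _ _)) (vnonneg f p.1)
      exact (div_le_iff₀ hM0).mpr h1
    · simp only [Set.mem_setOf_eq, not_lt]
      have h1 : ε ≤ M * v g p.2 := by
        refine hγ'.trans (key.trans ?_)
        exact mul_le_mul_of_nonneg_right ((hMf p.1).trans (le_max_left _ _)) (vnonneg g p.2)
      rw [hδdef, div_le_iff₀' hM0]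
      exact h1

lemma mem_A_iff {m : ℕ} {r : ℝ} {f : MvPowerSeries (Fin m) F} :
    f ∈ A F m r ↔ Tendsto (fun γ : Fin m →₀ ℕ => ‖coeff γ f‖ * r ^ mdeg γ)
      cofinite (nhds 0) := ⟨fun h => h, fun h => h⟩

instance {m : ℕ} : IsDomain (MvPowerSeries (Fin m) F) :=
  NoZeroDivisors.to_isDomain _

/-- The Gauss norm `|f|_r = sup_γ |a_γ| r^{|γ|}`. -/
noncomputable def nrm (r : ℝ) {m : ℕ} (f : MvPowerSeries (Fin m) F) : ℝ :=
  ⨆ γ : Fin m →₀ ℕ, ‖coeff γ f‖ * r ^ mdeg γ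

/-- For `0 < r ≤ R`, `A^m(R) ⊆ A^m(r)`. -/
lemma A_mono {m : ℕ} {r R : ℝ} (h0 : 0 < r) (hrR : r ≤ R) : A F m R ≤ A F m r := by
  intro f hf
  rw [mem_A_iff] at hf ⊢
  refine squeeze_zero (fun γ => by positivity) (fun γ => ?_) hf
  exact mul_le_mul_of_nonneg_left (pow_le_pow_left₀ h0.le hrR _) (norm_nonneg _)

/-- Evaluation of a power series at a point, as a (possibly junk) sum. -/
noncomputable def eval {m : ℕ} (f : MvPowerSeries (Fin m) F) (z : Fin m → F) : F :=
  ∑' γ : Fin m →₀ ℕ, coeff γ f * ∏ i, z i ^ (γ i)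

/-- The ring of integers `{a : |a| ≤ 1}` of `F`. -/
def O : Subring F where
  carrier := {a | ‖a‖ ≤ 1}
  zero_mem' := by simp
  one_mem' := by simp
  add_mem' := by
    intro a b ha hb
    exact (IsUltrametricDist.norm_add_le_max a b).trans (max_le ha hb)
  neg_mem' := by intro a ha; simpa using ha
  mul_mem' := by
    intro a b ha hb
    rw [Set.mem_setOf_eq, norm_mul]
    exact mul_le_one₀ ha (norm_nonneg b) hb

/-- The maximal ideal `{a : |a| < 1}` of the ring of integers. -/
def mIdeal : Ideal (O F) where
  carrier := {a | ‖(a : F)‖ < 1}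
  zero_mem' := by simp
  add_mem' := by
    intro a b ha hb
    exact lt_of_le_of_lt (IsUltrametricDist.norm_add_le_max (a : F) b) (max_lt ha hb)
  smul_mem' := by
    intro c a ha
    simp only [Set.mem_setOf_eq, smul_eq_mul] at ha ⊢
    rw [Subring.coe_mul, norm_mul]
    exact mul_lt_one_of_nonneg_of_lt_one_right c.2 (norm_nonneg _) ha

/-- The residue class field of `F`. -/
def Res := O F ⧸ mIdeal F

noncomputable instance : CommRing (Res F) := by unfold Res; infer_instance

/-- Reduction of an element of absolute value at most `1` to the residue field. -/
noncomputable def red (a : F) (h : ‖a‖ ≤ 1) : Res F :=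
  Ideal.Quotient.mk (mIdeal F) ⟨a, h⟩

/-- The ring of entire functions on `F^m`: power series lying in every `A^m(r)`. -/
def Ent (m : ℕ) : Subring (MvPowerSeries (Fin m) F) where
  carrier := {f | ∀ r ∈ VG F, f ∈ A F m r}
  zero_mem' := fun r _ => (A F m r).zero_mem
  one_mem' := fun r _ => (A F m r).one_mem
  add_mem' := fun hf hg r hr => (A F m r).add_mem (hf r hr) (hg r hr)
  neg_mem' := fun hf r hr => (A F m r).neg_mem (hf r hr)
  mul_mem' := fun hf hg r hr => (A F m r).mul_mem (hf r hr) (hg r hr)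

lemma mem_Ent_iff {m : ℕ} {f : MvPowerSeries (Fin m) F} :
    f ∈ Ent F m ↔ ∀ r ∈ VG F, f ∈ A F m r := Iff.rfl

/-- `d` is a greatest common divisor of the family `s`. -/
def IsGCDOf {α : Type*} [CommRing α] {ι : Type*} (d : α) (s : ι → α) : Prop :=
  (∀ i, d ∣ s i) ∧ ∀ e : α, (∀ i, e ∣ s i) → e ∣ d

section LastVariable

variable (m : ℕ)

/-- The subring of power series in `m+1` variables not depending on the last variable. -/
def indepLast : Subring (MvPowerSeries (Fin (m+1)) F) where
  carrier := {f | ∀ γ : Fin (m+1) →₀ ℕ, γ (Fin.last m) ≠ 0 → coeff γ f = 0}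
  zero_mem' := by intro γ _; simp
  one_mem' := by
    intro γ hγ
    have h : γ ≠ 0 := fun h => hγ (by simp [h])
    simp [MvPowerSeries.coeff_one, h]
  add_mem' := by
    intro f g hf hg γ hγ
    simp [map_add, hf γ hγ, hg γ hγ]
  neg_mem' := by
    intro f hf γ hγ
    simp [hf γ hγ]
  mul_mem' := by
    intro f g hf hg γ hγ
    rw [MvPowerSeries.coeff_mul]
    refine Finset.sum_eq_zero fun p hp => ?_
    have hpsum : p.1 + p.2 = γ := Finset.HasAntidiagonal.mem_antidiagonal.mp hp
    by_cases h1 : p.1 (Fin.last m) = 0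
    · have h2 : p.2 (Fin.last m) ≠ 0 := by
        intro h2
        apply hγ
        rw [← hpsum, Finsupp.add_apply, h1, h2]
      rw [hg p.2 h2, mul_zero]
    · rw [hf p.1 h1, zero_mul]

/-- The ring `A^{m-1}(r)`: analytic functions not depending on the last variable. -/
noncomputable def Aprev (r : ℝ) : Subring (MvPowerSeries (Fin (m+1)) F) :=
  A F (m+1) r ⊓ indepLast F m

lemma Aprev_le (r : ℝ) : Aprev F m r ≤ A F (m+1) r := inf_le_left

lemma X_mem (r : ℝ) {k : ℕ} (i : Fin k) : (X i : MvPowerSeries (Fin k) F) ∈ A F k r := by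
  rw [mem_A_iff]
  refine tendsto_const_nhds.congr' ?_
  refine Filter.eventuallyEq_of_mem
    ((Set.finite_singleton (Finsupp.single i 1)).compl_mem_cofinite) ?_
  intro γ hγ
  have h : γ ≠ Finsupp.single i 1 := by simpa using hγ
  simp [MvPowerSeries.X, MvPowerSeries.coeff_monomial, h]

/-- The last coordinate function `z_m` as an element of `A^m(r)`. -/
noncomputable def zmA (r : ℝ) : A F (m+1) r :=
  ⟨X (Fin.last m), X_mem F r (Fin.last m)⟩

/-- Interpret a polynomial `W ∈ A^{m-1}(r)[z_m]` as an analytic function in `A^m(r)`. -/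
noncomputable def toAm (r : ℝ) (W : Polynomial (Aprev F m r)) : A F (m+1) r :=
  Polynomial.eval₂ (Subring.inclusion (Aprev_le F m r)) (zmA F m r) W

/-- `W ∈ A^{m-1}(r)[z_m]` is a Weierstrass polynomial of degree `n = deg W`:
it is monic and `|W|_r = r^n`. -/
def IsWeierstrass (r : ℝ) (W : Polynomial (Aprev F m r)) : Prop :=
  W.Monic ∧ nrm F r ((toAm F m r W : A F (m+1) r) : MvPowerSeries (Fin (m+1)) F)
    = r ^ W.natDegree

/-- The coefficient `A_j` of `z_m^j` when `f` is written as `Σ_j A_j(z') z_m^j`,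
viewed as a power series not involving the last variable. -/
noncomputable def slice (f : MvPowerSeries (Fin (m+1)) F) (j : ℕ) :
    MvPowerSeries (Fin (m+1)) F :=
  fun γ => if γ (Fin.last m) = 0 then
    coeff (γ + Finsupp.single (Fin.last m) j) f else 0

/-- `f` is `z_m`-distinguished of degree `n` in `A^m(r)`: writing `f = Σ_j A_j z_m^j`,
`A_n` is a unit in `A^{m-1}(r)`, `|f|_r = |A_n|_r r^n`, and `|A_j|_r r^j < |A_n|_r r^n`
for `j > n`. -/
def IsDistinguished (r : ℝ) (f : MvPowerSeries (Fin (m+1)) F) (n : ℕ) : Prop :=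
  (∃ h : slice F m f n ∈ Aprev F m r, IsUnit (⟨slice F m f n, h⟩ : Aprev F m r)) ∧
  nrm F r f = nrm F r (slice F m f n) * r ^ n ∧
  ∀ j : ℕ, n < j → nrm F r (slice F m f j) * r ^ j < nrm F r (slice F m f n) * r ^ n

/-- The linear forms `z_i + u_i z_m` (and `z_m` for `i = m`) defining
the change of variables `σ_u`. -/
noncomputable def linSub (u : Fin m → F) (i : Fin (m+1)) : MvPolynomial (Fin (m+1)) F :=
  MvPolynomial.X i + (if h : (i : ℕ) < m then
    MvPolynomial.C (u ⟨i, h⟩) * MvPolynomial.X (Fin.last m) else 0)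

/-- The composition `f ∘ σ_u`, where
`σ_u(z_1,…,z_m) = (z_1 + u_1 z_m, …, z_{m-1} + u_{m-1} z_m, z_m)`. -/
noncomputable def sigmaSub (u : Fin m → F) (f : MvPowerSeries (Fin (m+1)) F) :
    MvPowerSeries (Fin (m+1)) F :=
  fun δ => ∑ t ∈ Finset.Nat.antidiagonalTuple (m+1) (mdeg δ),
    coeff (Finsupp.equivFunOnFinite.symm t) f *
      MvPolynomial.coeff δ (∏ i, linSub F m u i ^ t i)

end LastVariable

/-- The formal partial derivative `∂f/∂z_j` of a power series. -/
noncomputable def pderiv {m : ℕ} (j : Fin m) (f : MvPowerSeries (Fin m) F) :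
    MvPowerSeries (Fin m) F :=
  fun γ => ((γ j + 1 : ℕ) : F) * coeff (γ + Finsupp.single j 1) f

lemma mdeg_single {m : ℕ} (i : Fin m) (j : ℕ) : mdeg (Finsupp.single i j) = j := by
  show (Finsupp.single i j).sum (fun _ (n : ℕ) => n) = j
  exact Finsupp.sum_single_index rfl

lemma coeff_coe_mul_X_pow (m : ℕ) (r : ℝ) (A : Aprev F m r) (j j' : ℕ) :
    coeff (Finsupp.single (Fin.last m) j')
      ((A : MvPowerSeries (Fin (m+1)) F) * X (Fin.last m) ^ j)
      = if j' = j then constantCoeff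
          (A : MvPowerSeries (Fin (m+1)) F) else 0 := by
  classical
  have hind : (A : MvPowerSeries (Fin (m+1)) F) ∈ indepLast F m :=
    (Subring.mem_inf.mp A.2).2
  rw [MvPowerSeries.X_pow_eq, MvPowerSeries.coeff_mul]
  by_cases h : j' = j
  · subst h
    rw [Finset.sum_eq_single ((0 : Fin (m+1) →₀ ℕ), Finsupp.single (Fin.last m) j')]
    · simp [MvPowerSeries.coeff_monomial, coeff_zero_eq_constantCoeff]
    · rintro ⟨p, q⟩ hpq hne
      have hsum : p + q = Finsupp.single (Fin.last m) j' :=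
        Finset.HasAntidiagonal.mem_antidiagonal.mp hpq
      by_cases hq : q = Finsupp.single (Fin.last m) j'
      · exfalso
        apply hne
        subst hq
        have hp0 : p = 0 := by
          have := hsum
          rwa [add_eq_right] at this
        rw [hp0]
      · rw [MvPowerSeries.coeff_monomial, if_neg hq, mul_zero]
    · intro hc
      exact absurd (Finset.HasAntidiagonal.mem_antidiagonal.mpr (zero_add _)) hc
  · rw [if_neg h]
    apply Finset.sum_eq_zero
    rintro ⟨p, q⟩ hpq
    have hsum : p + q = Finsupp.single (Fin.last m) j' :=
      Finset.HasAntidiagonal.mem_antidiagonal.mp hpq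
    by_cases hq : q = Finsupp.single (Fin.last m) j
    · subst hq
      have hp : p (Fin.last m) ≠ 0 := by
        intro h0
        apply h
        have := congrArg (fun γ : Fin (m+1) →₀ ℕ => γ (Fin.last m)) hsum
        simpa [h0] using this.symm
      rw [hind p hp, zero_mul]
    · rw [MvPowerSeries.coeff_monomial, if_neg hq, mul_zero]

lemma coeff_toAm (m : ℕ) (r : ℝ) (W : Polynomial (Aprev F m r)) (j' : ℕ) :
    coeff (Finsupp.single (Fin.last m) j')
      ((toAm F m r W : A F (m+1) r) : MvPowerSeries (Fin (m+1)) F)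
      = constantCoeff
          ((W.coeff j' : Aprev F m r) : MvPowerSeries (Fin (m+1)) F) := by
  classical
  have hf : ((toAm F m r W : A F (m+1) r) : MvPowerSeries (Fin (m+1)) F)
      = Polynomial.eval₂ (((A F (m+1) r).subtype).comp
          (Subring.inclusion (Aprev_le F m r))) (X (Fin.last m)) W := by
    show (A F (m+1) r).subtype (Polynomial.eval₂ _ _ W) = _
    rw [Polynomial.hom_eval₂]
    rfl
  rw [hf, Polynomial.eval₂_eq_sum, Polynomial.sum_def, map_sum]
  have h2 : ∀ e ∈ W.support,
      coeff (Finsupp.single (Fin.last m) j')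
        ((((A F (m+1) r).subtype).comp (Subring.inclusion (Aprev_le F m r)))
            (W.coeff e) * X (Fin.last m) ^ e)
      = if j' = e then constantCoeff
          ((W.coeff e : Aprev F m r) : MvPowerSeries (Fin (m+1)) F) else 0 :=
    fun e _ => coeff_coe_mul_X_pow F m r (W.coeff e) e j'
  rw [Finset.sum_congr rfl h2, Finset.sum_ite_eq]
  split_ifs with h
  · rfl
  · rw [Polynomial.notMem_support_iff.mp h]
    simp

/-- a Weierstrass polynomial of positive degree has a zero
`(0,…,0,b)` with `|b| ≤ r`. -/
theorem statement4 [CompleteSpace F] [IsAlgClosed F]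
    (hnt : ∃ c : F, c ≠ 0 ∧ ‖c‖ ≠ 1)
    (m : ℕ) (r : ℝ) (hr : r ∈ VG F)
    (W : Polynomial (Aprev F m r)) (hW : IsWeierstrass F m r W)
    (hd : 0 < W.natDegree) :
    ∃ b : F, ‖b‖ ≤ r ∧
      eval F ((toAm F m r W : A F (m+1) r) : MvPowerSeries (Fin (m+1)) F)
        (fun i => if i = Fin.last m then b else 0) = 0 := by
  classical
  obtain ⟨hWm, hWn⟩ := hW
  have hr0 : 0 < r := VG.pos F hr
  set f : MvPowerSeries (Fin (m+1)) F :=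
    ((toAm F m r W : A F (m+1) r) : MvPowerSeries (Fin (m+1)) F) with hfdef
  set φ : Aprev F m r →+* F :=
    (constantCoeff).comp ((Aprev F m r).subtype) with hφ
  set Q : Polynomial F := W.map φ with hQ
  have hQm : Q.Monic := hWm.map φ
  have hQd : Q.natDegree = W.natDegree := hWm.natDegree_map φ
  have hcf : ∀ j, coeff (Finsupp.single (Fin.last m) j) f = Q.coeff j := by
    intro j
    rw [hQ, Polynomial.coeff_map]
    exact coeff_toAm F m r W j
  have hbdd : BddAbove (Set.range fun γ : Fin (m+1) →₀ ℕ =>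
      ‖coeff γ f‖ * r ^ mdeg γ) := by
    have hfA : f ∈ A F (m+1) r := (toAm F m r W).2
    exact ((mem_A_iff F).mp hfA).bddAbove_range_of_cofinite
  have hcb : ∀ j, ‖Q.coeff j‖ * r ^ j ≤ r ^ W.natDegree := by
    intro j
    have h1 : ‖coeff (Finsupp.single (Fin.last m) j) f‖
        * r ^ mdeg (Finsupp.single (Fin.last m) j) ≤ nrm F r f :=
      le_ciSup hbdd _
    rw [hcf j, mdeg_single] at h1
    calc ‖Q.coeff j‖ * r ^ j ≤ nrm F r f := h1
      _ = r ^ W.natDegree := hWn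
  have hQdeg : Q.degree ≠ 0 := by
    rw [Polynomial.degree_eq_natDegree hQm.ne_zero, hQd]
    exact_mod_cast hd.ne'
  obtain ⟨b, hb⟩ := IsAlgClosed.exists_root Q hQdeg
  rw [Polynomial.IsRoot] at hb
  have hbr : ‖b‖ ≤ r := by
    by_contra hcon
    push_neg at hcon
    have hb0 : 0 < ‖b‖ := lt_trans hr0 hcon
    set d := W.natDegree with hddef
    have hQcD : Q.coeff d = 1 := by rw [← hQd]; exact hQm.coeff_natDegree
    have hsplit : Q.eval b
        = b ^ d + ∑ j ∈ Finset.range d, Q.coeff j * b ^ j := by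
      rw [Polynomial.eval_eq_sum_range, hQd, Finset.sum_range_succ, hQcD,
        one_mul]
      exact add_comm _ _
    have hsum0 : b ^ d + ∑ j ∈ Finset.range d, Q.coeff j * b ^ j = 0 := by
      rw [← hsplit]; exact hb
    have hnorm : ‖b‖ ^ d = ‖∑ j ∈ Finset.range d, Q.coeff j * b ^ j‖ := by
      rw [← norm_pow, eq_neg_of_add_eq_zero_left hsum0, norm_neg]
    have hne : (Finset.range d).Nonempty :=
      Finset.nonempty_range_iff.mpr hd.ne'
    obtain ⟨j, hjmem, hjle⟩ :=
      IsUltrametricDist.exists_norm_finset_sum_le_of_nonempty hne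
        (fun j => Q.coeff j * b ^ j)
    have hjd : j < d := Finset.mem_range.mp hjmem
    have h1 : ‖Q.coeff j‖ ≤ r ^ (d - j) := by
      have h2 := hcb j
      have h3 : r ^ d = r ^ (d - j) * r ^ j := by
        rw [← pow_add, Nat.sub_add_cancel hjd.le]
      rw [h3] at h2
      exact le_of_mul_le_mul_right h2 (pow_pos hr0 j)
    have h4 : r ^ (d - j) < ‖b‖ ^ (d - j) :=
      pow_lt_pow_left₀ hcon hr0.le (Nat.sub_ne_zero_of_lt hjd)
    have h5 : ‖Q.coeff j * b ^ j‖ < ‖b‖ ^ d := by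
      rw [norm_mul, norm_pow]
      calc ‖Q.coeff j‖ * ‖b‖ ^ j ≤ r ^ (d - j) * ‖b‖ ^ j :=
            mul_le_mul_of_nonneg_right h1 (by positivity)
        _ < ‖b‖ ^ (d - j) * ‖b‖ ^ j :=
            mul_lt_mul_of_pos_right h4 (by positivity)
        _ = ‖b‖ ^ d := by rw [← pow_add, Nat.sub_add_cancel hjd.le]
    have : ‖b‖ ^ d < ‖b‖ ^ d := lt_of_le_of_lt (hnorm ▸ hjle) h5
    exact absurd this (lt_irrefl _)
  refine ⟨b, hbr, ?_⟩
  set z : Fin (m+1) → F := fun i => if i = Fin.last m then b else 0 with hz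
  have hprod : ∀ j : ℕ,
      (∏ i, z i ^ (Finsupp.single (Fin.last m) j) i) = b ^ j := by
    intro j
    rw [Finset.prod_eq_single (Fin.last m)]
    · simp [hz]
    · intro i _ hi
      rw [Finsupp.single_eq_of_ne hi, pow_zero]
    · intro h; exact absurd (Finset.mem_univ _) h
  set T : Finset (Fin (m+1) →₀ ℕ) :=
    (Finset.range (W.natDegree + 1)).image
      (fun j => Finsupp.single (Fin.last m) j) with hT
  have hzero : ∀ γ ∉ T, coeff γ f * ∏ i, z i ^ γ i = 0 := by
    intro γ hγ
    by_cases hsupp : ∀ i, i ≠ Fin.last m → γ i = 0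
    · have hγeq : γ = Finsupp.single (Fin.last m) (γ (Fin.last m)) := by
        ext i
        by_cases hi : i = Fin.last m
        · subst hi; simp
        · rw [hsupp i hi, Finsupp.single_eq_of_ne hi]
      have hbig : W.natDegree < γ (Fin.last m) := by
        by_contra hle
        push_neg at hle
        exact hγ (Finset.mem_image.mpr ⟨γ (Fin.last m),
          Finset.mem_range.mpr (Nat.lt_succ_of_le hle), hγeq.symm⟩)
      rw [hγeq, hcf, Polynomial.coeff_eq_zero_of_natDegree_lt (hQd ▸ hbig),
        zero_mul]
    · push_neg at hsupp
      obtain ⟨i, hi, hγi⟩ := hsupp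
      have hp0 : (∏ i', z i' ^ γ i') = 0 :=
        Finset.prod_eq_zero (Finset.mem_univ i)
          (by rw [hz]; simp [hi, zero_pow hγi])
      rw [hp0, mul_zero]
  have hTsum : eval F f z
      = ∑ j ∈ Finset.range (W.natDegree + 1), Q.coeff j * b ^ j := by
    have h1 : eval F f z = ∑ γ ∈ T, coeff γ f * ∏ i, z i ^ γ i := by
      unfold eval
      exact tsum_eq_sum hzero
    rw [h1, hT, Finset.sum_image
      (by intro x _ y _ h; exact Finsupp.single_injective _ h)]
    exact Finset.sum_congr rfl fun j _ => by rw [hcf j, hprod j]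
  rw [hTsum, ← Polynomial.eval_eq_sum_range' (by omega) b]
  exact hb

end NA
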